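/- Let I ⊂ ℝ be a compact interval and let f, λ : I → ℝ be C² functions with 0 < c₁ ≤ |f''(x)| ≤ c₂ for all x ∈ I. Then there exist constants C₁, C₂ > 0 and a threshold T > 0, depending only on c₁, c₂ and sup_{x∈I}|λ''(x)|, with the following property. Let (a₁, a₂) ∈ ℤ² with |a₂| ≥ T, set 𝓕(x) := a₂ f(x) + a₁ x + λ(x), and suppose x₀ ∈ I satisfies 𝓕'(x₀) = 0. Then: (i) for all x ∈ I, C₁·|a₂|·|𝓕(x) − 𝓕(x₀)| ≤ 𝓕'(x)² ≤ C₂·|a₂|·|𝓕(x) − 𝓕(x₀)|; and (ii) if a₀, a₀' ∈ ℤ with a₀ ≠ a₀', |𝓕(x) + a₀| < 1/4 for some x ∈ I, and |𝓕(x₀) + a₀'| ≤ 1/2, then |𝓕(x) − 𝓕(x₀)| ≥ |a₀ − a₀'|/4. -/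

import Mathlib

open MeasureTheory Set

-- helper: a function vanishing at x₀ whose derivative has the sign of (x - x₀) is nonneg
lemma nonneg_of_deriv_sign (a b x₀ : ℝ) (hx₀ : x₀ ∈ Icc a b)
    (W : ℝ → ℝ) (hW : Differentiable ℝ W) (hW0 : W x₀ = 0)
    (hpos : ∀ x ∈ Icc a b, x₀ ≤ x → 0 ≤ deriv W x)
    (hneg : ∀ x ∈ Icc a b, x ≤ x₀ → deriv W x ≤ 0) :
    ∀ x ∈ Icc a b, 0 ≤ W x := by
  intro x hx
  rcases le_total x₀ x with h | h
  · have hmW : MonotoneOn W (Icc x₀ b) := by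
      apply monotoneOn_of_deriv_nonneg (convex_Icc _ _) hW.continuous.continuousOn
        (hW.differentiableOn.mono interior_subset)
      intro y hy
      rw [interior_Icc] at hy
      exact hpos y ⟨le_trans hx₀.1 hy.1.le, hy.2.le⟩ hy.1.le
    have := hmW ⟨le_refl _, hx₀.2⟩ ⟨h, hx.2⟩ h
    linarith [hW0 ▸ this]
  · have hmW : AntitoneOn W (Icc a x₀) := by
      apply antitoneOn_of_deriv_nonpos (convex_Icc _ _) hW.continuous.continuousOn
        (hW.differentiableOn.mono interior_subset)
      intro y hy
      rw [interior_Icc] at hy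
      exact hneg y ⟨hy.1.le, le_trans hy.2.le hx₀.2⟩ hy.2.le
    have := hmW ⟨hx.1, h⟩ ⟨hx₀.1, le_refl _⟩ h
    linarith [hW0 ▸ this]

lemma lemA (a b x₀ m M : ℝ) (G : ℝ → ℝ)
    (hd1 : Differentiable ℝ G) (hd2 : Differentiable ℝ (deriv G))
    (hm : 0 < m)
    (hbd : ∀ x ∈ Icc a b, m ≤ deriv (deriv G) x ∧ deriv (deriv G) x ≤ M)
    (hx₀ : x₀ ∈ Icc a b) (h0 : deriv G x₀ = 0) :
    ∀ x ∈ Icc a b, 2*m*(G x - G x₀) ≤ (deriv G x)^2 ∧ (deriv G x)^2 ≤ 2*M*(G x - G x₀) := by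
  have hmono : MonotoneOn (deriv G) (Icc a b) := by
    apply monotoneOn_of_deriv_nonneg (convex_Icc _ _) hd2.continuous.continuousOn
      (hd2.differentiableOn.mono interior_subset)
    intro y hy
    exact le_trans hm.le (hbd y (interior_subset hy)).1
  have hGpos : ∀ x ∈ Icc a b, x₀ ≤ x → 0 ≤ deriv G x := by
    intro x hx h; have := hmono hx₀ hx h; linarith [h0 ▸ this]
  have hGneg : ∀ x ∈ Icc a b, x ≤ x₀ → deriv G x ≤ 0 := by
    intro x hx h; have := hmono hx hx₀ h; linarith [h0 ▸ this]
  -- lower bound function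
  have hdW : ∀ (c : ℝ) (y : ℝ), HasDerivAt (fun z => (deriv G z)^2 - 2*c*(G z - G x₀))
      (2 * deriv G y ^ 1 * deriv (deriv G) y - 2*c*(deriv G y)) y := by
    intro c y
    exact ((hd2 y).hasDerivAt.pow 2).sub (((hd1 y).hasDerivAt.sub_const (G x₀)).const_mul (2*c))
  have hWdiff : ∀ c : ℝ, Differentiable ℝ (fun z => (deriv G z)^2 - 2*c*(G z - G x₀)) :=
    fun c => fun y => ((hdW c y).differentiableAt)
  have hderW : ∀ (c : ℝ) (y : ℝ), deriv (fun z => (deriv G z)^2 - 2*c*(G z - G x₀)) y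
      = 2 * deriv G y * (deriv (deriv G) y - c) := by
    intro c y; rw [(hdW c y).deriv]; ring
  -- lower: W := G'^2 - 2m(G - G₀) ≥ 0
  have hlow : ∀ x ∈ Icc a b, 0 ≤ (deriv G x)^2 - 2*m*(G x - G x₀) := by
    apply nonneg_of_deriv_sign a b x₀ hx₀ _ (hWdiff m) (by simp [h0])
    · intro x hx h; rw [hderW]
      have h1 := hGpos x hx h
      have h2 := (hbd x hx).1
      nlinarith
    · intro x hx h; rw [hderW]
      have h1 := hGneg x hx h
      have h2 := (hbd x hx).1
      nlinarith
  -- upper: K := 2M(G - G₀) - G'^2 ≥ 0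
  have hdK : ∀ y : ℝ, HasDerivAt (fun z => 2*M*(G z - G x₀) - (deriv G z)^2)
      (2*M*(deriv G y) - 2 * deriv G y ^ 1 * deriv (deriv G) y) y := by
    intro y
    exact (((hd1 y).hasDerivAt.sub_const (G x₀)).const_mul (2*M)).sub ((hd2 y).hasDerivAt.pow 2)
  have hderK : ∀ y : ℝ, deriv (fun z => 2*M*(G z - G x₀) - (deriv G z)^2) y
      = 2 * deriv G y * (M - deriv (deriv G) y) := by
    intro y; rw [(hdK y).deriv]; ring
  have hhigh : ∀ x ∈ Icc a b, 0 ≤ 2*M*(G x - G x₀) - (deriv G x)^2 := by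
    apply nonneg_of_deriv_sign a b x₀ hx₀ _ (fun y => (hdK y).differentiableAt) (by simp [h0])
    · intro x hx h; rw [hderK]
      have h1 := hGpos x hx h
      have h2 := (hbd x hx).2
      nlinarith
    · intro x hx h; rw [hderK]
      have h1 := hGneg x hx h
      have h2 := (hbd x hx).2
      nlinarith
  intro x hx
  exact ⟨by linarith [hlow x hx], by linarith [hhigh x hx]⟩

set_option maxHeartbeats 1000000 in
/-- **Lemma 2 (after Huang).** For `𝓕(x) = a₂ f(x) + a₁ x + λ(x)` with
`|a₂|` large, `𝓕'(x)² ≍ |a₂| |𝓕(x) - 𝓕(x₀)|` where `𝓕'(x₀) = 0`, and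
`|𝓕(x) - 𝓕(x₀)| ≫ |a₀ - a₀'|`. -/
theorem F_deriv_sq_comparable_and_gap
    (a b : ℝ) (hab : a ≤ b)
    (f lam : ℝ → ℝ) (hf : ContDiff ℝ 2 f) (hlam : ContDiff ℝ 2 lam)
    (c₁ c₂ : ℝ) (hc₁ : 0 < c₁)
    (hbound : ∀ x ∈ Icc a b, c₁ ≤ |deriv (deriv f) x| ∧ |deriv (deriv f) x| ≤ c₂) :
    ∃ C₁ > (0 : ℝ), ∃ C₂ > (0 : ℝ), ∃ T > (0 : ℝ),
      ∀ a₁ a₂ : ℤ, ∀ F : ℝ → ℝ,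
        F = (fun x => (a₂ : ℝ) * f x + (a₁ : ℝ) * x + lam x) →
        T ≤ |(a₂ : ℝ)| →
        ∀ x₀ ∈ Icc a b, deriv F x₀ = 0 →
          (∀ x ∈ Icc a b,
            C₁ * |(a₂ : ℝ)| * |F x - F x₀| ≤ (deriv F x) ^ 2 ∧
            (deriv F x) ^ 2 ≤ C₂ * |(a₂ : ℝ)| * |F x - F x₀|) ∧
          (∀ a₀ a₀' : ℤ, a₀ ≠ a₀' →
            |F x₀ + (a₀' : ℝ)| ≤ 1 / 2 →
            ∀ x ∈ Icc a b, |F x + (a₀ : ℝ)| < 1 / 4 →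
              (|a₀ - a₀'| : ℝ) / 4 ≤ |F x - F x₀|) := by
  -- regularity facts
  have hreg : ∀ g : ℝ → ℝ, ContDiff ℝ 2 g →
      Differentiable ℝ g ∧ Differentiable ℝ (deriv g) ∧ Continuous (deriv (deriv g)) := by
    intro g hg
    have h1 : ContDiff ℝ (1+1) g := by norm_num; exact hg
    rw [contDiff_succ_iff_deriv] at h1
    have h2 := h1.2.2
    exact ⟨h1.1, h2.differentiable one_ne_zero, h2.continuous_deriv le_rfl⟩
  obtain ⟨hfd, hfd2, hfc⟩ := hreg f hf
  obtain ⟨hld, hld2, hlc⟩ := hreg lam hlam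
  -- bound on lam''
  obtain ⟨L₀, hL₀⟩ := isCompact_Icc.exists_bound_of_continuousOn (hlc.continuousOn (s := Icc a b))
  set L : ℝ := max L₀ 0 with hLdef
  have hL : ∀ x ∈ Icc a b, |deriv (deriv lam) x| ≤ L := by
    intro x hx
    calc |deriv (deriv lam) x| = ‖deriv (deriv lam) x‖ := (Real.norm_eq_abs _).symm
    _ ≤ L₀ := hL₀ x hx
    _ ≤ L := le_max_left _ _
  have hLnn : 0 ≤ L := le_max_right _ _
  have hc₂ : c₁ ≤ c₂ := le_trans (hbound a ⟨le_refl _, hab⟩).1 (hbound a ⟨le_refl _, hab⟩).2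
  -- sign constancy of f''
  have hsign : (∀ x ∈ Icc a b, c₁ ≤ deriv (deriv f) x) ∨
      (∀ x ∈ Icc a b, deriv (deriv f) x ≤ -c₁) := by
    have habs : ∀ x ∈ Icc a b, c₁ ≤ deriv (deriv f) x ∨ deriv (deriv f) x ≤ -c₁ := by
      intro x hx
      rcases abs_cases (deriv (deriv f) x) with ⟨h, _⟩ | ⟨h, _⟩
      · left; linarith [(hbound x hx).1]
      · right; linarith [(hbound x hx).1]
    rcases habs a ⟨le_refl _, hab⟩ with ha | ha
    · left
      intro x hx
      rcases habs x hx with h | h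
      · exact h
      · exfalso
        have hsub : Icc a x ⊆ Icc a b := Icc_subset_Icc (le_refl _) hx.2
        have := intermediate_value_Icc' hx.1 (hfc.continuousOn (s := Icc a x))
        have h0 : (0:ℝ) ∈ Icc (deriv (deriv f) x) (deriv (deriv f) a) := ⟨by linarith, by linarith⟩
        obtain ⟨z, hz, hz0⟩ := this h0
        have := (hbound z (hsub hz)).1
        rw [hz0] at this; simp at this; linarith
    · right
      intro x hx
      rcases habs x hx with h | h
      · exfalso
        have hsub : Icc a x ⊆ Icc a b := Icc_subset_Icc (le_refl _) hx.2
        have := intermediate_value_Icc hx.1 (hfc.continuousOn (s := Icc a x))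
        have h0 : (0:ℝ) ∈ Icc (deriv (deriv f) a) (deriv (deriv f) x) := ⟨by linarith, by linarith⟩
        obtain ⟨z, hz, hz0⟩ := this h0
        have := (hbound z (hsub hz)).1
        rw [hz0] at this; simp at this; linarith
      · exact h
  refine ⟨c₁, hc₁, 2*(c₁+c₂), by linarith, 2*(L+1)/c₁, by positivity, ?_⟩
  intro a₁ a₂ F hFeq hT x₀ hx₀ hdF0
  subst hFeq
  set F : ℝ → ℝ := fun x => (a₂ : ℝ) * f x + (a₁ : ℝ) * x + lam x with hFdef
  -- derivative computations
  have hdF : ∀ y, HasDerivAt F ((a₂:ℝ) * deriv f y + (a₁:ℝ) + deriv lam y) y := by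
    intro y
    have h1 : HasDerivAt (fun x => (a₂:ℝ) * f x) ((a₂:ℝ) * deriv f y) y :=
      ((hfd y).hasDerivAt).const_mul _
    have h2 : HasDerivAt (fun x => (a₁:ℝ) * x) ((a₁:ℝ)) y := by
      simpa using (hasDerivAt_id y).const_mul ((a₁:ℝ))
    exact (h1.add h2).add (hld y).hasDerivAt
  have hderF : deriv F = fun y => (a₂:ℝ) * deriv f y + (a₁:ℝ) + deriv lam y :=
    funext fun y => (hdF y).deriv
  have hdF2 : ∀ y, HasDerivAt (deriv F) ((a₂:ℝ) * deriv (deriv f) y + deriv (deriv lam) y) y := by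
    intro y
    rw [hderF]
    have h1 : HasDerivAt (fun x => (a₂:ℝ) * deriv f x) ((a₂:ℝ) * deriv (deriv f) y) y :=
      ((hfd2 y).hasDerivAt).const_mul _
    exact (h1.add_const ((a₁:ℝ))).add (hld2 y).hasDerivAt
  have hderF2 : deriv (deriv F) = fun y => (a₂:ℝ) * deriv (deriv f) y + deriv (deriv lam) y :=
    funext fun y => (hdF2 y).deriv
  have hFdiff : Differentiable ℝ F := fun y => (hdF y).differentiableAt
  have hdFdiff : Differentiable ℝ (deriv F) := fun y => (hdF2 y).differentiableAt
  -- choose sign ε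
  have hT' : 2*(L+1) ≤ c₁ * |(a₂:ℝ)| := by
    rw [div_le_iff₀ hc₁] at hT; linarith
  have ha₂ : (0:ℝ) < |(a₂:ℝ)| := by nlinarith
  obtain ⟨ε, hε, hεlow⟩ : ∃ ε : ℝ, (ε = 1 ∨ ε = -1) ∧
      ∀ x ∈ Icc a b, c₁ * |(a₂:ℝ)| ≤ ε * ((a₂:ℝ) * deriv (deriv f) x) := by
    rcases hsign with hs | hs <;> rcases le_or_gt 0 ((a₂:ℝ)) with h2 | h2
    · exact ⟨1, Or.inl rfl, fun x hx => by
        rw [abs_of_nonneg h2]; nlinarith [hs x hx]⟩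
    · exact ⟨-1, Or.inr rfl, fun x hx => by
        rw [abs_of_neg h2]; nlinarith [hs x hx]⟩
    · exact ⟨-1, Or.inr rfl, fun x hx => by
        rw [abs_of_nonneg h2]; nlinarith [hs x hx]⟩
    · exact ⟨1, Or.inl rfl, fun x hx => by
        rw [abs_of_neg h2]; nlinarith [hs x hx]⟩
  have hεabs : |ε| = 1 := by rcases hε with h | h <;> simp [h]
  have hεsq : ε * ε = 1 := by rcases hε with h | h <;> simp [h]
  -- the normalized function G
  set G : ℝ → ℝ := fun x => ε * F x with hGdef
  have hdG : ∀ y, HasDerivAt G (ε * deriv F y) y := fun y => ((hFdiff y).hasDerivAt).const_mul _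
  have hderG : deriv G = fun y => ε * deriv F y := funext fun y => (hdG y).deriv
  have hdG2 : ∀ y, HasDerivAt (deriv G) (ε * deriv (deriv F) y) y := by
    intro y; rw [hderG]; exact ((hdFdiff y).hasDerivAt).const_mul _
  have hderG2 : deriv (deriv G) = fun y => ε * deriv (deriv F) y :=
    funext fun y => (hdG2 y).deriv
  set m : ℝ := c₁/2 * |(a₂:ℝ)| with hmdef
  set M : ℝ := (c₁+c₂) * |(a₂:ℝ)| with hMdef
  have hm : 0 < m := by positivity
  have hbdG : ∀ x ∈ Icc a b, m ≤ deriv (deriv G) x ∧ deriv (deriv G) x ≤ M := by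
    intro x hx
    rw [hderG2]
    simp only
    rw [hderF2]
    simp only
    have h1 := hεlow x hx
    have h2 := hL x hx
    have h3 : |ε * deriv (deriv lam) x| ≤ L := by rw [abs_mul, hεabs, one_mul]; exact h2
    have h4 : -L ≤ ε * deriv (deriv lam) x ∧ ε * deriv (deriv lam) x ≤ L := abs_le.mp h3
    have h5 : ε * ((a₂:ℝ) * deriv (deriv f) x) ≤ |(a₂:ℝ)| * c₂ := by
      calc ε * ((a₂:ℝ) * deriv (deriv f) x) ≤ |ε * ((a₂:ℝ) * deriv (deriv f) x)| := le_abs_self _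
      _ = |(a₂:ℝ)| * |deriv (deriv f) x| := by rw [abs_mul, abs_mul, hεabs, one_mul]
      _ ≤ |(a₂:ℝ)| * c₂ := by
          exact mul_le_mul_of_nonneg_left (hbound x hx).2 (abs_nonneg _)
    constructor
    · have : ε * ((a₂:ℝ) * deriv (deriv f) x + deriv (deriv lam) x)
          = ε * ((a₂:ℝ) * deriv (deriv f) x) + ε * deriv (deriv lam) x := by ring
      rw [this]; rw [hmdef]; nlinarith
    · have : ε * ((a₂:ℝ) * deriv (deriv f) x + deriv (deriv lam) x)
          = ε * ((a₂:ℝ) * deriv (deriv f) x) + ε * deriv (deriv lam) x := by ring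
      rw [this]; rw [hMdef]; nlinarith
  have hdG0 : deriv G x₀ = 0 := by rw [hderG]; simp [hdF0]
  have hGd1 : Differentiable ℝ G := fun y => (hdG y).differentiableAt
  have hGd2 : Differentiable ℝ (deriv G) := fun y => (hdG2 y).differentiableAt
  have hkey := lemA a b x₀ m M G hGd1 hGd2 hm hbdG hx₀ hdG0
  constructor
  · intro x hx
    obtain ⟨hk1, hk2⟩ := hkey x hx
    have hGF : G x - G x₀ = ε * (F x - F x₀) := by rw [hGdef]; ring
    have hG'F : (deriv G x)^2 = (deriv F x)^2 := by
      rw [hderG]; simp only; nlinarith [hεsq]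
    have hnn : 0 ≤ ε * (F x - F x₀) := by
      by_contra hcon
      push_neg at hcon
      have hM : (0:ℝ) < 2*M := by rw [hMdef]; nlinarith
      rw [hGF] at hk2
      have hneg : 2*M*(ε * (F x - F x₀)) < 0 := mul_neg_of_pos_of_neg hM hcon
      linarith [sq_nonneg (deriv G x)]
    have habsF : |F x - F x₀| = ε * (F x - F x₀) := by
      rcases hε with h | h
      · rw [h] at hnn ⊢; rw [one_mul] at hnn ⊢; exact abs_of_nonneg hnn
      · rw [h] at hnn ⊢
        rw [abs_of_nonpos (by linarith)]; ring
    rw [hG'F, hGF] at hk1 hk2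
    constructor
    · calc c₁ * |(a₂:ℝ)| * |F x - F x₀| = 2*m*(ε * (F x - F x₀)) := by
            rw [habsF, hmdef]; ring
      _ ≤ (deriv F x)^2 := hk1
    · calc (deriv F x)^2 ≤ 2*M*(ε * (F x - F x₀)) := hk2
      _ = 2*(c₁+c₂) * |(a₂:ℝ)| * |F x - F x₀| := by rw [habsF, hMdef]; ring
  · intro a₀ a₀' hne h₀' x hx h₀
    have hd1 : (1:ℝ) ≤ (|a₀ - a₀'| : ℝ) := by
      have := Int.one_le_abs (sub_ne_zero.mpr hne)
      exact_mod_cast this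
    have hcast : (|a₀ - a₀'| : ℝ) = |(a₀:ℝ) - (a₀':ℝ)| := by push_cast; ring
    have htri : |(a₀:ℝ) - (a₀':ℝ)| ≤ |F x + (a₀:ℝ)| + |F x₀ + (a₀':ℝ)| + |F x - F x₀| := by
      have e : (a₀:ℝ) - (a₀':ℝ) = (F x + a₀) - (F x₀ + a₀') - (F x - F x₀) := by ring
      rw [e]
      calc |(F x + ↑a₀) - (F x₀ + ↑a₀') - (F x - F x₀)|
          ≤ |(F x + ↑a₀) - (F x₀ + ↑a₀')| + |F x - F x₀| := abs_sub _ _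
        _ ≤ |F x + ↑a₀| + |F x₀ + ↑a₀'| + |F x - F x₀| := by
            linarith [abs_sub (F x + (a₀:ℝ)) (F x₀ + (a₀':ℝ))]
    rw [hcast] at hd1 ⊢
    linarith
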